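/- Let M be a loopless matroid of rank n on {0,...,N}. In the top degree, the Orlik–Solomon ideal satisfies OS^n = ℤ⟨F_I : I dependent of size n⟩ + Im(∂ : ⋀^{n+1} W → ⋀^n W) = ℤ⟨F_I : I dependent of size n⟩ + Ker(∂ : ⋀^n W → ⋀^{n-1} W). -/

import Mathlib

/- Shared definitions: exterior algebra pairing, basis vectors, boundary operator,
   and elementary matroid notions (rank, looplessness) not present in this Mathlib. -/

open ExteriorAlgebra

set_option maxHeartbeats 1000000
set_option synthInstance.maxHeartbeats 400000

open Classical in
/-- `e_S`: sum of the standard basis vectors of `ℤ^n` indexed by `S`. -/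
noncomputable def eS {n : ℕ} (S : Set (Fin n)) : Fin n → ℤ := fun j => if j ∈ S then 1 else 0

/-- the `i`-th standard basis vector of `ℤ^n`. -/
noncomputable def fb {n : ℕ} (i : Fin n) : Fin n → ℤ := Pi.single i 1

/-- The pairing of a pure `k`-fold wedge `v₁ ∧ ... ∧ v_k` of vectors of `V` with the
exterior algebra of the dual module, determined by
`⟨w₁ ∧ ... ∧ w_k, v₁ ∧ ... ∧ v_k⟩ = det (wᵢ (vⱼ))` on the degree-`k` part and `0` on
other degrees. -/
noncomputable def pairPure {V : Type*} [AddCommGroup V] [Module ℤ V] (k : ℕ)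
    (v : Fin k → V) : ExteriorAlgebra ℤ (Module.Dual ℤ V) →ₗ[ℤ] ℤ :=
  ExteriorAlgebra.liftAlternating fun m =>
    if h : m = k then
      h ▸ (Matrix.detRowAlternating.compLinearMap
        (LinearMap.pi fun j : Fin k => LinearMap.applyₗ (v j)))
    else 0

/-- A matroid is loopless if every singleton of the ground set is independent. -/
def Matroid.Loopless' {α : Type*} (M : Matroid α) : Prop := ∀ x ∈ M.E, M.Indep {x}

/-- The rank of a set in a matroid: the largest cardinality of an independent subset. -/
noncomputable def Matroid.rk' {α : Type*} (M : Matroid α) (X : Set α) : ℕ :=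
  sSup {m : ℕ | ∃ I, I ⊆ X ∧ M.Indep I ∧ I.ncard = m}

/-- The boundary operator `∂` on `⋀^• W` for `W = ℤ^n` with basis `f_i`:
interior multiplication by the functional sending each `f_i` to `1`.  It is the odd
derivation with `∂ f_i = 1`. -/
noncomputable def bnd (n : ℕ) :
    ExteriorAlgebra ℤ (Fin n → ℤ) →ₗ[ℤ] ExteriorAlgebra ℤ (Fin n → ℤ) :=
  CliffordAlgebra.contractLeft (∑ i : Fin n, LinearMap.proj i)

/-- `F_I = f_{i₀} ∧ ... ∧ f_{i_k}` for a finite subset `I` (in increasing order). -/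
noncomputable def FI {n : ℕ} (I : Finset (Fin n)) : ExteriorAlgebra ℤ (Fin n → ℤ) :=
  ιMulti ℤ I.card fun j => fb ((I.orderIsoOfFin rfl j : I) : Fin n)

/-- The Orlik-Solomon ideal: the two-sided ideal (equivalently, the `ℤ`-span of all
`x * ∂F_I * y`) generated by the `∂ F_I` over dependent sets `I` of the matroid `M`. -/
noncomputable def OSideal {n : ℕ} (M : Matroid (Fin n)) :
    Submodule ℤ (ExteriorAlgebra ℤ (Fin n → ℤ)) :=
  Submodule.span ℤ {z | ∃ x, ∃ y, ∃ I : Finset (Fin n),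
    M.Dep (I : Set (Fin n)) ∧ z = x * bnd n (FI I) * y}

noncomputable def dd (m : ℕ) : Module.Dual ℤ (Fin m → ℤ) := ∑ i : Fin m, LinearMap.proj i

lemma dd_fb {m : ℕ} (i : Fin m) : dd m (fb i) = 1 := by
  simp [dd, fb, Finset.sum_pi_single']

lemma bnd_ι_mul {m : ℕ} (v : Fin m → ℤ) (x : ExteriorAlgebra ℤ (Fin m → ℤ)) :
    bnd m (ι ℤ v * x) = dd m v • x - ι ℤ v * bnd m x :=
  CliffordAlgebra.contractLeft_ι_mul _ _ _

lemma bnd_algebraMap {m : ℕ} (r : ℤ) : bnd m (algebraMap ℤ _ r) = 0 :=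
  CliffordAlgebra.contractLeft_algebraMap _ _ _

lemma FI_eq {m : ℕ} (I : Finset (Fin m)) (k : ℕ) (h : I.card = k) :
    FI I = ιMulti ℤ k fun j => fb ((I.orderIsoOfFin h j : I) : Fin m) := by
  subst h; rfl

lemma FI_empty {m : ℕ} : FI (∅ : Finset (Fin m)) = 1 :=
  ιMulti_zero_apply _

lemma image_orderIso {m : ℕ} (I : Finset (Fin m)) {k : ℕ} (h : I.card = k) :
    Finset.image (fun j => ((I.orderIsoOfFin h j : I) : Fin m)) Finset.univ = I := by
  ext x
  simp only [Finset.mem_image, Finset.mem_univ, true_and]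
  constructor
  · rintro ⟨j, rfl⟩; exact (I.orderIsoOfFin h j).2
  · intro hx; exact ⟨(I.orderIsoOfFin h).symm ⟨x, hx⟩, by simp⟩

lemma mono_eq {m k : ℕ} (g : Fin k → Fin m) (hg : Function.Injective g) :
    ∃ c : ℤ, ιMulti ℤ k (fun j => fb (g j)) = c • FI (Finset.image g Finset.univ) := by
  set J := Finset.image g Finset.univ with hJ
  have hcard : J.card = k := by
    rw [hJ, Finset.card_image_of_injective _ hg, Finset.card_univ, Fintype.card_fin]
  set e := J.orderIsoOfFin hcard with he
  have hmem : ∀ j, g j ∈ J := fun j => Finset.mem_image_of_mem _ (Finset.mem_univ j)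
  have hbij : Function.Bijective (fun j => (⟨g j, hmem j⟩ : J)) := by
    rw [Fintype.bijective_iff_injective_and_card]
    constructor
    · intro a b hab
      exact hg (congrArg Subtype.val hab)
    · simp [hcard]
  let σ : Equiv.Perm (Fin k) := (Equiv.ofBijective _ hbij).trans e.toEquiv.symm
  have hcomp : ∀ j, ((e (σ j) : J) : Fin m) = g j := by
    intro j
    simp [σ, Equiv.ofBijective]
  refine ⟨(Equiv.Perm.sign σ : ℤ), ?_⟩
  rw [FI_eq J k hcard]
  have := (ιMulti ℤ k (M := Fin m → ℤ)).map_perm (fun j => fb ((e j : J) : Fin m)) σ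
  have hfun : ((fun j => fb ((e j : J) : Fin m)) ∘ σ) = fun j => fb (g j) := by
    funext j; simp [hcomp j]
  rw [hfun] at this
  rw [this, Units.smul_def]

lemma ι_mul_FI_eq {m : ℕ} (i : Fin m) (J : Finset (Fin m)) :
    ι ℤ (fb i) * FI J
      = ιMulti ℤ (J.card + 1) (Fin.cons (fb i)
          (fun j => fb ((J.orderIsoOfFin rfl j : J) : Fin m))) := by
  rw [FI, ιMulti_succ_apply, Fin.cons_zero]
  congr 1

lemma ι_mul_FI_of_mem {m : ℕ} {i : Fin m} {J : Finset (Fin m)} (hi : i ∈ J) :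
    ι ℤ (fb i) * FI J = 0 := by
  rw [ι_mul_FI_eq]
  set j₀ := (J.orderIsoOfFin rfl).symm ⟨i, hi⟩ with hj₀
  have h1 : ((J.orderIsoOfFin rfl j₀ : J) : Fin m) = i :=
    congrArg Subtype.val ((J.orderIsoOfFin rfl).apply_symm_apply ⟨i, hi⟩)
  refine AlternatingMap.map_eq_zero_of_eq _ _ (i := 0) (j := j₀.succ) ?_
    (Ne.symm (Fin.succ_ne_zero _))
  rw [Fin.cons_zero, Fin.cons_succ]
  exact congrArg fb h1.symm

lemma ι_mul_FI_of_not_mem {m : ℕ} {i : Fin m} {J : Finset (Fin m)} (hi : i ∉ J) :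
    ∃ c : ℤ, ι ℤ (fb i) * FI J = c • FI (insert i J) := by
  rw [ι_mul_FI_eq]
  set f : Fin J.card → Fin m := fun j => ((J.orderIsoOfFin rfl j : J) : Fin m) with hf
  have hfmem : ∀ j, f j ∈ J := fun j => (J.orderIsoOfFin rfl j).2
  have hfinj : Function.Injective f := fun a b hab =>
    (J.orderIsoOfFin rfl).injective (Subtype.ext hab)
  have hg : Function.Injective (Fin.cons i f : Fin (J.card + 1) → Fin m) := by
    intro a b hab
    induction a using Fin.cases with
    | zero =>
      induction b using Fin.cases with
      | zero => rfl
      | succ b =>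
        rw [Fin.cons_zero, Fin.cons_succ] at hab
        exact absurd (hab ▸ hfmem b) hi
    | succ a =>
      induction b using Fin.cases with
      | zero =>
        rw [Fin.cons_zero, Fin.cons_succ] at hab
        exact absurd (hab ▸ hfmem a) hi
      | succ b =>
        rw [Fin.cons_succ, Fin.cons_succ] at hab
        exact congrArg Fin.succ (hfinj hab)
  have him : Finset.image (Fin.cons i f : Fin (J.card + 1) → Fin m) Finset.univ
      = insert i J := by
    ext x
    simp only [Finset.mem_image, Finset.mem_univ, true_and, Finset.mem_insert]
    constructor
    · rintro ⟨j, rfl⟩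
      induction j using Fin.cases with
      | zero => exact Or.inl (by rw [Fin.cons_zero])
      | succ j => exact Or.inr (by rw [Fin.cons_succ]; exact hfmem j)
    · rintro (rfl | hx)
      · exact ⟨0, Fin.cons_zero _ _⟩
      · refine ⟨((J.orderIsoOfFin rfl).symm ⟨x, hx⟩).succ, ?_⟩
        rw [Fin.cons_succ, hf]
        exact congrArg Subtype.val ((J.orderIsoOfFin rfl).apply_symm_apply ⟨x, hx⟩)
  obtain ⟨c, hc⟩ := mono_eq _ hg
  refine ⟨c, ?_⟩
  rw [← him, ← hc]
  congr 1
  funext j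
  induction j using Fin.cases with
  | zero => rw [Fin.cons_zero, Fin.cons_zero]
  | succ j => rw [Fin.cons_succ, Fin.cons_succ]

/-- Span of the `FI T` for `T ⊇ B` of cardinality `k`. -/
noncomputable def FIspan (m k : ℕ) (B : Finset (Fin m)) :
    Submodule ℤ (ExteriorAlgebra ℤ (Fin m → ℤ)) :=
  Submodule.span ℤ {z | ∃ T : Finset (Fin m), B ⊆ T ∧ T.card = k ∧ z = FI T}

lemma FIspan_antitone {m k : ℕ} {B B' : Finset (Fin m)} (h : B' ⊆ B) :
    FIspan m k B ≤ FIspan m k B' := by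
  apply Submodule.span_mono
  rintro z ⟨T, hT, hc, rfl⟩
  exact ⟨T, h.trans hT, hc, rfl⟩

lemma mul_left_mem_of_span {m : ℕ} (a : ExteriorAlgebra ℤ (Fin m → ℤ))
    {s : Set (ExteriorAlgebra ℤ (Fin m → ℤ))} {P : Submodule ℤ (ExteriorAlgebra ℤ (Fin m → ℤ))}
    (h : ∀ z ∈ s, a * z ∈ P) {x} (hx : x ∈ Submodule.span ℤ s) : a * x ∈ P := by
  induction hx using Submodule.span_induction with
  | mem z hz => exact h z hz
  | zero => rw [mul_zero]; exact zero_mem P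
  | add y z _ _ hy hz => rw [mul_add]; exact add_mem hy hz
  | smul c y _ hy => rw [mul_smul_comm]; exact Submodule.smul_mem _ _ hy

lemma ι_mul_mem {m : ℕ} (v : Fin m → ℤ) {z : ExteriorAlgebra ℤ (Fin m → ℤ)}
    {P : Submodule ℤ (ExteriorAlgebra ℤ (Fin m → ℤ))}
    (h : ∀ i : Fin m, ι ℤ (fb i) * z ∈ P) : ι ℤ v * z ∈ P := by
  have hv : (ι ℤ v : ExteriorAlgebra ℤ (Fin m → ℤ)) = ∑ i, v i • ι ℤ (fb i) := by
    have h1 : v = ∑ i, v i • fb i := by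
      have h2 : ∀ i : Fin m, v i • fb i = Pi.single i (v i) := by
        intro i
        funext j
        simp [fb, Pi.single_apply, mul_comm]
      simp only [h2]
      exact (Finset.univ_sum_single v).symm
    conv_lhs => rw [h1]
    rw [map_sum]
    simp only [map_smul]
  rw [hv, Finset.sum_mul]
  exact Submodule.sum_mem _ fun i _ => by
    rw [smul_mul_assoc]; exact Submodule.smul_mem _ _ (h i)

lemma ι_fb_mul_FI_mem {m : ℕ} (i : Fin m) (S B : Finset (Fin m)) (hB : B ⊆ S) :
    ι ℤ (fb i) * FI S ∈ FIspan m (S.card + 1) (insert i B) := by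
  by_cases hi : i ∈ S
  · rw [ι_mul_FI_of_mem hi]; exact zero_mem _
  · obtain ⟨c, hc⟩ := ι_mul_FI_of_not_mem hi
    rw [hc]
    refine Submodule.smul_mem _ _ (Submodule.subset_span ⟨insert i S,
      Finset.insert_subset_insert _ hB, ?_, rfl⟩)
    rw [Finset.card_insert_of_notMem hi]

lemma mono_mul_FI_mem {m : ℕ} (k : ℕ) (g : Fin k → Fin m) (T : Finset (Fin m)) :
    ιMulti ℤ k (fun j => fb (g j)) * FI T
      ∈ FIspan m (k + T.card) (T ∪ Finset.image g Finset.univ) := by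
  induction k with
  | zero =>
    rw [ιMulti_zero_apply, one_mul]
    refine Submodule.subset_span ⟨T, ?_, by simp, rfl⟩
    simp
  | succ k ih =>
    have hsplit : ιMulti ℤ (k+1) (fun j => fb (g j))
        = ι ℤ (fb (g 0)) * ιMulti ℤ k (fun j => fb (g j.succ)) := by
      rw [ιMulti_succ_apply]
      rfl
    rw [hsplit, mul_assoc]
    have him : (T ∪ Finset.image g Finset.univ)
        ⊆ insert (g 0) (T ∪ Finset.image (fun j : Fin k => g j.succ) Finset.univ) := by
      intro x hx
      rcases Finset.mem_union.mp hx with hx | hx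
      · exact Finset.mem_insert_of_mem (Finset.mem_union_left _ hx)
      · obtain ⟨j, -, rfl⟩ := Finset.mem_image.mp hx
        induction j using Fin.cases with
        | zero => exact Finset.mem_insert_self _ _
        | succ j => exact Finset.mem_insert_of_mem (Finset.mem_union_right _
            (Finset.mem_image.mpr ⟨j, Finset.mem_univ _, rfl⟩))
    refine SetLike.le_def.mp (FIspan_antitone him) ?_
    refine mul_left_mem_of_span _ ?_ (ih (fun j => g j.succ))
    rintro z ⟨J, hJ, hc, rfl⟩
    have := ι_fb_mul_FI_mem (g 0) J (T ∪ Finset.image (fun j : Fin k => g j.succ) Finset.univ) hJ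
    rw [hc] at this
    have harith : k + T.card + 1 = k + 1 + T.card := by omega
    rw [harith] at this
    exact this

lemma FI_mul_FI_mem {m : ℕ} (S T : Finset (Fin m)) :
    FI S * FI T ∈ FIspan m (S.card + T.card) S := by
  have := mono_mul_FI_mem S.card (fun j => ((S.orderIsoOfFin rfl j : S) : Fin m)) T
  rw [image_orderIso S rfl] at this
  exact SetLike.le_def.mp (FIspan_antitone (Finset.subset_union_right)) this

lemma Kspan {m : ℕ} (k : ℕ) :
    ⋀[ℤ]^k (Fin m → ℤ) ≤ FIspan m k ∅ := by
  induction k with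
  | zero =>
    intro x hx
    rw [exteriorPower, pow_zero] at hx
    obtain ⟨r, rfl⟩ := Submodule.mem_one.mp hx
    have : (algebraMap ℤ (ExteriorAlgebra ℤ (Fin m → ℤ))) r = r • FI ∅ := by
      rw [FI_empty, Algebra.algebraMap_eq_smul_one]
    rw [this]
    exact Submodule.smul_mem _ _ (Submodule.subset_span ⟨∅, Finset.Subset.refl _, rfl, rfl⟩)
  | succ k ih =>
    show LinearMap.range (ι ℤ) ^ (k+1) ≤ _
    rw [pow_succ']
    refine Submodule.mul_le.mpr ?_
    rintro _ ⟨v, rfl⟩ x hx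
    refine ι_mul_mem v fun i => ?_
    refine mul_left_mem_of_span _ ?_ (ih hx)
    rintro z ⟨S, -, hc, rfl⟩
    have := ι_fb_mul_FI_mem i S ∅ (Finset.empty_subset _)
    rw [hc] at this
    exact SetLike.le_def.mp (FIspan_antitone (Finset.empty_subset _)) this

lemma bnd_deg0 {m : ℕ} {x : ExteriorAlgebra ℤ (Fin m → ℤ)}
    (hx : x ∈ ⋀[ℤ]^0 (Fin m → ℤ)) : bnd m x = 0 := by
  rw [exteriorPower, pow_zero] at hx
  obtain ⟨r, rfl⟩ := Submodule.mem_one.mp hx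
  exact bnd_algebraMap r

lemma bnd_deg {m : ℕ} (k : ℕ) :
    ∀ x ∈ ⋀[ℤ]^(k+1) (Fin m → ℤ), bnd m x ∈ ⋀[ℤ]^k (Fin m → ℤ) := by
  induction k with
  | zero =>
    intro x hx
    rw [exteriorPower, pow_one] at hx
    obtain ⟨v, rfl⟩ := hx
    have h1 : bnd m (ι ℤ v) = algebraMap ℤ _ (dd m v) :=
      CliffordAlgebra.contractLeft_ι _ _ _
    rw [h1, exteriorPower, pow_zero]
    exact Submodule.mem_one.mpr ⟨dd m v, rfl⟩
  | succ k ih =>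
    intro x hx
    rw [exteriorPower, pow_succ'] at hx
    refine Submodule.mul_induction_on hx ?_ ?_
    · rintro _ ⟨v, rfl⟩ y hy
      rw [bnd_ι_mul]
      refine sub_mem (Submodule.smul_mem _ _ hy) ?_
      show _ ∈ LinearMap.range (ι ℤ) ^ (k+1)
      rw [pow_succ']
      exact Submodule.mul_mem_mul ⟨v, rfl⟩ (ih y hy)
    · intro a b ha hb
      rw [map_add]
      exact add_mem ha hb

lemma bnd_mul {m : ℕ} (a : ℕ) :
    ∀ x ∈ ⋀[ℤ]^a (Fin m → ℤ), ∀ w : ExteriorAlgebra ℤ (Fin m → ℤ),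
      bnd m (x * w) = bnd m x * w + ((-1 : ℤ)^a) • (x * bnd m w) := by
  induction a with
  | zero =>
    intro x hx w
    rw [exteriorPower, pow_zero] at hx
    obtain ⟨r, rfl⟩ := Submodule.mem_one.mp hx
    rw [bnd_algebraMap, zero_mul, zero_add, pow_zero, one_smul,
      Algebra.algebraMap_eq_smul_one, smul_mul_assoc, one_mul, map_smul,
      smul_mul_assoc, one_mul]
  | succ a ih =>
    intro x hx w
    rw [exteriorPower, pow_succ'] at hx
    refine Submodule.mul_induction_on hx ?_ ?_
    · rintro _ ⟨v, rfl⟩ y hy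
      rw [mul_assoc, bnd_ι_mul, bnd_ι_mul, ih y hy w]
      simp only [mul_add, sub_mul, smul_mul_assoc, mul_smul_comm, mul_assoc,
        pow_succ, mul_neg_one, neg_smul]
      abel
    · intro p q hp hq
      rw [add_mul, map_add, map_add, add_mul, hp, hq, add_mul, smul_add]
      abel

lemma mul_mem_of_span₂ {m : ℕ} {s t : Set (ExteriorAlgebra ℤ (Fin m → ℤ))}
    {P : Submodule ℤ (ExteriorAlgebra ℤ (Fin m → ℤ))}
    (h : ∀ a ∈ s, ∀ b ∈ t, a * b ∈ P) :
    ∀ u ∈ Submodule.span ℤ s, ∀ x ∈ Submodule.span ℤ t, u * x ∈ P := by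
  intro u hu
  induction hu using Submodule.span_induction with
  | mem a ha => exact fun x hx => mul_left_mem_of_span a (h a ha) hx
  | zero => intro x hx; rw [zero_mul]; exact zero_mem P
  | add p q _ _ hp hq => intro x hx; rw [add_mul]; exact add_mem (hp x hx) (hq x hx)
  | smul c p _ hp => intro x hx; rw [smul_mul_assoc]; exact Submodule.smul_mem _ _ (hp x hx)

lemma FI_mul_FI_mem' {m : ℕ} (S T : Finset (Fin m)) :
    FI S * FI T ∈ FIspan m (S.card + T.card) (T ∪ S) := by
  have := mono_mul_FI_mem S.card (fun j => ((S.orderIsoOfFin rfl j : S) : Fin m)) T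
  rw [image_orderIso S rfl] at this
  exact this

set_option synthInstance.maxHeartbeats 400000

/-- For a loopless matroid `M` of rank `n` on `{0, ..., N}`, in top
degree the Orlik-Solomon ideal satisfies
`OS^n = ℤ⟨F_I : I dependent of size n⟩ + Im(∂ : ⋀^{n+1} W → ⋀^n W)
      = ℤ⟨F_I : I dependent of size n⟩ + Ker(∂ : ⋀^n W → ⋀^{n-1} W)`. -/
theorem stmt_8 {N n : ℕ} (M : Matroid (Fin (N + 1))) (hM : M.Loopless')
    (hE : M.E = Set.univ) (hn : M.rk' Set.univ = n) :
    OSideal M ⊓ ⋀[ℤ]^n (Fin (N + 1) → ℤ) =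
      Submodule.span ℤ {z | ∃ I : Finset (Fin (N + 1)), M.Dep (I : Set (Fin (N + 1))) ∧
          I.card = n ∧ z = FI I} ⊔
        Submodule.map (bnd (N + 1)) (⋀[ℤ]^(n + 1) (Fin (N + 1) → ℤ)) ∧
    OSideal M ⊓ ⋀[ℤ]^n (Fin (N + 1) → ℤ) =
      Submodule.span ℤ {z | ∃ I : Finset (Fin (N + 1)), M.Dep (I : Set (Fin (N + 1))) ∧
          I.card = n ∧ z = FI I} ⊔
        (⋀[ℤ]^n (Fin (N + 1) → ℤ) ⊓ LinearMap.ker (bnd (N + 1))) := by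
  classical
  set K : Submodule ℤ (ExteriorAlgebra ℤ (Fin (N+1) → ℤ)) :=
    Submodule.span ℤ {z | ∃ I : Finset (Fin (N + 1)), M.Dep (I : Set (Fin (N + 1))) ∧
      I.card = n ∧ z = FI I} with hKdef
  set Im : Submodule ℤ (ExteriorAlgebra ℤ (Fin (N+1) → ℤ)) :=
    Submodule.map (bnd (N + 1)) (⋀[ℤ]^(n + 1) (Fin (N + 1) → ℤ)) with hImdef
  have hE' : ∀ X : Set (Fin (N+1)), X ⊆ M.E := fun X => by
    rw [hE]; exact Set.subset_univ X
  -- independent sets have card at most n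
  have hindep : ∀ J : Finset (Fin (N+1)), M.Indep ↑J → J.card ≤ n := by
    intro J hJ
    have hmem : J.card ∈ {m : ℕ | ∃ I : Set (Fin (N+1)),
        I ⊆ Set.univ ∧ M.Indep I ∧ I.ncard = m} :=
      ⟨J, Set.subset_univ _, hJ, Set.ncard_coe_finset J⟩
    have hbdd : BddAbove {m : ℕ | ∃ I : Set (Fin (N+1)),
        I ⊆ Set.univ ∧ M.Indep I ∧ I.ncard = m} := by
      refine ⟨N + 1, ?_⟩
      rintro k ⟨I, -, -, rfl⟩
      calc I.ncard ≤ (Set.univ : Set (Fin (N+1))).ncard :=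
            Set.ncard_le_ncard (Set.subset_univ I) Set.finite_univ
        _ = N + 1 := by simp [Set.ncard_univ]
    have h := le_csSup hbdd hmem
    rw [Matroid.rk'] at hn
    omega
  have hdep : ∀ J : Finset (Fin (N+1)), J.card = n + 1 → M.Dep (J : Set (Fin (N+1))) := by
    intro J hJ
    exact ⟨fun hi => by have := hindep J hi; omega, hE' _⟩
  have hFImem : ∀ (I : Finset (Fin (N+1))) (k : ℕ), I.card = k →
      FI I ∈ ⋀[ℤ]^k (Fin (N+1) → ℤ) := by
    intro I k h
    rw [FI_eq I k h]
    exact ιMulti_range ℤ k (Set.mem_range_self _)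
  have hFIOS : ∀ I : Finset (Fin (N+1)), M.Dep (I : Set (Fin (N+1))) → FI I ∈ OSideal M := by
    intro I hI
    have hne : I.Nonempty := by
      rcases I.eq_empty_or_nonempty with rfl | h
      · exact absurd M.empty_indep (by simpa using hI.1)
      · exact h
    obtain ⟨i, hi⟩ := hne
    have h1 := bnd_ι_mul (fb i) (FI I)
    rw [ι_mul_FI_of_mem hi, map_zero, dd_fb, one_smul] at h1
    have h2 : FI I = ι ℤ (fb i) * bnd (N+1) (FI I) * 1 := by
      rw [mul_one]
      exact sub_eq_zero.mp h1.symm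
    exact Submodule.subset_span ⟨ι ℤ (fb i), 1, I, hI, h2⟩
  have hKle : K ≤ OSideal M ⊓ ⋀[ℤ]^n (Fin (N + 1) → ℤ) := by
    rw [hKdef, Submodule.span_le]
    rintro z ⟨I, hI, hc, rfl⟩
    exact ⟨hFIOS I hI, hFImem I n hc⟩
  have hImle : Im ≤ OSideal M ⊓ ⋀[ℤ]^n (Fin (N + 1) → ℤ) := by
    have hsp : ∀ w', w' ∈ FIspan (N+1) (n+1) (∅ : Finset (Fin (N+1))) →
        bnd (N+1) w' ∈ OSideal M := by
      intro w' hw'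
      induction hw' using Submodule.span_induction with
      | mem z hz =>
        obtain ⟨T, -, hTc, rfl⟩ := hz
        refine Submodule.subset_span ⟨1, 1, T, hdep T hTc, ?_⟩
        rw [one_mul, mul_one]
      | zero => rw [map_zero]; exact zero_mem _
      | add p q _ _ hp hq => rw [map_add]; exact add_mem hp hq
      | smul c p _ hp => rw [map_smul]; exact Submodule.smul_mem _ _ hp
    rintro _ ⟨w, hw, rfl⟩
    exact ⟨hsp w (Kspan (n+1) hw), bnd_deg n w hw⟩
  -- Im equals the kernel in top degree
  have hImD : Im = ⋀[ℤ]^n (Fin (N + 1) → ℤ) ⊓ LinearMap.ker (bnd (N + 1)) := by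
    apply le_antisymm
    · rintro _ ⟨w, hw, rfl⟩
      exact ⟨bnd_deg n w hw, LinearMap.mem_ker.mpr
        (CliffordAlgebra.contractLeft_contractLeft _ _)⟩
    · rintro x ⟨hx, hker⟩
      have hk : bnd (N+1) x = 0 := LinearMap.mem_ker.mp hker
      have h1 := bnd_ι_mul (fb 0) x
      rw [hk, mul_zero, sub_zero, dd_fb, one_smul] at h1
      refine ⟨ι ℤ (fb 0) * x, ?_, h1⟩
      show _ ∈ LinearMap.range (ι ℤ) ^ (n+1)
      rw [pow_succ']
      exact Submodule.mul_mem_mul ⟨fb 0, rfl⟩ hx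
  -- triple products with a dependent middle factor
  have hT : ∀ (p q : ℕ) (I : Finset (Fin (N+1))), M.Dep (I : Set (Fin (N+1))) →
      p + I.card + q = n → ∀ u ∈ ⋀[ℤ]^p (Fin (N+1) → ℤ), ∀ w ∈ ⋀[ℤ]^q (Fin (N+1) → ℤ),
      u * FI I * w ∈ K := by
    intro p q I hI hpq u hu w hw
    have hinner : FI I * w ∈ FIspan (N+1) (I.card + q) I := by
      refine mul_left_mem_of_span (FI I) ?_ (Kspan q hw)
      rintro z ⟨T, -, hTc, rfl⟩
      have h := FI_mul_FI_mem' I T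
      rw [hTc] at h
      exact FIspan_antitone Finset.subset_union_right h
    have hKspan' : FIspan (N+1) n I ≤ K := by
      rw [FIspan, Submodule.span_le]
      rintro z ⟨J, hIJ, hJc, rfl⟩
      exact Submodule.subset_span ⟨J, hI.superset (Finset.coe_subset.mpr hIJ) (hE' _), hJc, rfl⟩
    refine hKspan' ?_
    rw [mul_assoc]
    refine mul_mem_of_span₂ ?_ u (Kspan p hu) _ hinner
    rintro a ⟨S, -, hSc, rfl⟩ b ⟨J, hIJ, hJc, rfl⟩
    have h := FI_mul_FI_mem' S J
    rw [hSc, hJc] at h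
    have harith : p + (I.card + q) = n := by omega
    rw [harith] at h
    refine FIspan_antitone ?_ h
    exact hIJ.trans Finset.subset_union_left
  -- homogeneous generators of degree n lie in K ⊔ Im
  have hHG : ∀ (p q : ℕ) (I : Finset (Fin (N+1))), M.Dep (I : Set (Fin (N+1))) →
      ∀ x ∈ ⋀[ℤ]^p (Fin (N+1) → ℤ), ∀ y ∈ ⋀[ℤ]^q (Fin (N+1) → ℤ),
      p + (I.card - 1) + q = n → x * bnd (N+1) (FI I) * y ∈ K ⊔ Im := by
    intro p q I hI x hx y hy hdeg
    have hne : I.Nonempty := by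
      rcases I.eq_empty_or_nonempty with rfl | h
      · exact absurd M.empty_indep (by simpa using hI.1)
      · exact h
    obtain ⟨c, hc⟩ : ∃ c, I.card = c + 1 :=
      ⟨I.card - 1, by have := Finset.card_pos.mpr hne; omega⟩
    have hFI : FI I ∈ ⋀[ℤ]^(c+1) (Fin (N+1) → ℤ) := hFImem I _ hc
    have E1 := bnd_mul p x hx (FI I * y)
    have E2 := bnd_mul (c+1) (FI I) hFI y
    have hpp : ((-1:ℤ)^p) * ((-1:ℤ)^p) = 1 := by
      rw [← pow_add]; exact Even.neg_one_pow ⟨p, rfl⟩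
    have key : x * bnd (N+1) (FI I) * y
        = ((-1:ℤ)^p) • (bnd (N+1) (x * (FI I * y)))
          - ((-1:ℤ)^p) • (bnd (N+1) x * (FI I * y))
          - ((-1:ℤ)^(c+1)) • (x * (FI I * bnd (N+1) y)) := by
      rw [E1, E2]
      simp only [mul_add, mul_smul_comm, smul_add, smul_sub, smul_smul, hpp, one_smul,
        ← mul_assoc]
      module
    rw [key]
    refine sub_mem (sub_mem ?_ ?_) ?_
    · refine Submodule.smul_mem _ _ (Submodule.mem_sup_right ?_)
      refine Submodule.mem_map_of_mem ?_
      have h := SetLike.mul_mem_graded (A := fun i : ℕ => ⋀[ℤ]^i (Fin (N+1) → ℤ)) hx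
        (SetLike.mul_mem_graded (A := fun i : ℕ => ⋀[ℤ]^i (Fin (N+1) → ℤ)) hFI hy)
      have harith : p + (c + 1 + q) = n + 1 := by omega
      rw [harith] at h
      exact h
    · refine Submodule.smul_mem _ _ (Submodule.mem_sup_left ?_)
      match p, hx with
      | 0, hx => rw [bnd_deg0 hx, zero_mul]; exact zero_mem _
      | (p' + 1), hx =>
        rw [← mul_assoc]
        exact hT p' q I hI (by omega) _ (bnd_deg p' x hx) y hy
    · refine Submodule.smul_mem _ _ (Submodule.mem_sup_left ?_)
      match q, hy with
      | 0, hy => rw [bnd_deg0 hy, mul_zero, mul_zero]; exact zero_mem _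
      | (q' + 1), hy =>
        rw [← mul_assoc]
        exact hT p q' I hI (by omega) x hx _ (bnd_deg q' y hy)
  -- the main inclusion
  have hmain : OSideal M ⊓ ⋀[ℤ]^n (Fin (N + 1) → ℤ) ≤ K ⊔ Im := by
    rintro z ⟨hzOS, hzn⟩
    set π : ExteriorAlgebra ℤ (Fin (N+1) → ℤ) →ₗ[ℤ] ExteriorAlgebra ℤ (Fin (N+1) → ℤ) :=
      (Submodule.subtype _) ∘ₗ
        (DirectSum.component ℤ ℕ (fun i => ⋀[ℤ]^i (Fin (N+1) → ℤ)) n) ∘ₗ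
        (DirectSum.decomposeLinearEquiv (fun i : ℕ => ⋀[ℤ]^i (Fin (N+1) → ℤ))).toLinearMap
      with hπdef
    have hπsame : ∀ x ∈ ⋀[ℤ]^n (Fin (N+1) → ℤ), π x = x := by
      intro x hx
      exact DirectSum.decompose_of_mem_same (fun i : ℕ => ⋀[ℤ]^i (Fin (N+1) → ℤ)) hx
    have hπne : ∀ (k : ℕ) (x : ExteriorAlgebra ℤ (Fin (N+1) → ℤ)),
        x ∈ ⋀[ℤ]^k (Fin (N+1) → ℤ) → k ≠ n → π x = 0 := by
      intro k x hx hk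
      exact DirectSum.decompose_of_mem_ne (fun i : ℕ => ⋀[ℤ]^i (Fin (N+1) → ℤ)) hx hk
    have hπz : π z = z := hπsame z hzn
    have hmem : π z ∈ Submodule.map π (OSideal M) := Submodule.mem_map_of_mem hzOS
    suffices hOSπ : Submodule.map π (OSideal M) ≤ K ⊔ Im by
      rw [← hπz]; exact hOSπ hmem
    rw [OSideal, Submodule.map_span, Submodule.span_le]
    rintro _ ⟨g, ⟨x, y, I, hI, rfl⟩, rfl⟩
    have hbmem : bnd (N+1) (FI I) ∈ ⋀[ℤ]^(I.card - 1) (Fin (N+1) → ℤ) := by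
      have hne : I.Nonempty := by
        rcases I.eq_empty_or_nonempty with rfl | h
        · exact absurd M.empty_indep (by simpa using hI.1)
        · exact h
      have hpos := Finset.card_pos.mpr hne
      exact bnd_deg (I.card - 1) _ (hFImem I _ (by omega))
    show π (x * bnd (N+1) (FI I) * y) ∈ K ⊔ Im
    induction x using DirectSum.Decomposition.inductionOn
      (ℳ := fun i : ℕ => ⋀[ℤ]^i (Fin (N+1) → ℤ)) with
    | zero => rw [zero_mul, zero_mul, map_zero]; exact zero_mem _
    | add x1 x2 hx1 hx2 =>
      rw [add_mul, add_mul, map_add]; exact add_mem hx1 hx2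
    | homogeneous xm =>
      induction y using DirectSum.Decomposition.inductionOn
        (ℳ := fun i : ℕ => ⋀[ℤ]^i (Fin (N+1) → ℤ)) with
      | zero => rw [mul_zero, map_zero]; exact zero_mem _
      | add y1 y2 hy1 hy2 =>
        rw [mul_add, map_add]; exact add_mem hy1 hy2
      | homogeneous ym =>
        rename_i a b
        have hmem2 : (xm : ExteriorAlgebra ℤ (Fin (N+1) → ℤ)) * bnd (N+1) (FI I) *
            (ym : ExteriorAlgebra ℤ (Fin (N+1) → ℤ))
            ∈ ⋀[ℤ]^(a + (I.card - 1) + b) (Fin (N+1) → ℤ) :=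
          SetLike.mul_mem_graded
            (SetLike.mul_mem_graded (SetLike.coe_mem _) hbmem) (SetLike.coe_mem _)
        by_cases hd : a + (I.card - 1) + b = n
        · rw [hπsame _ (hd ▸ hmem2)]
          exact hHG a b I hI _ (SetLike.coe_mem _) _ (SetLike.coe_mem _) hd
        · rw [hπne (a + (I.card - 1) + b) _ hmem2 hd]
          exact zero_mem _
  have h1 : OSideal M ⊓ ⋀[ℤ]^n (Fin (N + 1) → ℤ) = K ⊔ Im :=
    le_antisymm hmain (sup_le hKle hImle)
  refine ⟨h1, ?_⟩
  rw [← hImD]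
  exact h1
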